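/- Let n ≥ 1, let I ⊆ ℝ be an open interval, and let D_{n−1}, D_n, D_{n+1} : I → ℝ be differentiable with D_{n−1} and D_n nonvanishing on I. Suppose the functions a_n = D_{n−1}D_{n+1}/D_n² and b_n = D_{n+1}'/D_{n+1} − D_n'/D_n, b_{n−1} = D_n'/D_n − D_{n−1}'/D_{n−1} satisfy the string equation a_n·(b_n + b_{n−1}) = n on I (and D_{n+1} is nonvanishing where needed). Then (D_{n+1}/D_{n−1})' = n·(D_n/D_{n−1})² on I. -/

import Mathlib

/-- If on an open interval `(a,b)` the differentiable functions `D_{n−1}, D_n, D_{n+1}`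
(`Dm, Dn, Dp`) are nonvanishing and the string equation
`a_n (b_n + b_{n−1}) = n` holds, where `a_n = Dm·Dp/Dn²`,
`b_n = Dp'/Dp − Dn'/Dn`, `b_{n−1} = Dn'/Dn − Dm'/Dm`, then
`(Dp/Dm)' = n (Dn/Dm)²` on `(a,b)`. -/
theorem string_equation_identity (n : ℕ) (hn : 1 ≤ n) (a b : ℝ)
    (Dm Dn Dp : ℝ → ℝ)
    (hdm : ∀ x ∈ Set.Ioo a b, DifferentiableAt ℝ Dm x)
    (hdn : ∀ x ∈ Set.Ioo a b, DifferentiableAt ℝ Dn x)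
    (hdp : ∀ x ∈ Set.Ioo a b, DifferentiableAt ℝ Dp x)
    (hm0 : ∀ x ∈ Set.Ioo a b, Dm x ≠ 0)
    (hn0 : ∀ x ∈ Set.Ioo a b, Dn x ≠ 0)
    (hp0 : ∀ x ∈ Set.Ioo a b, Dp x ≠ 0)
    (hstring : ∀ x ∈ Set.Ioo a b,
      (Dm x * Dp x / (Dn x) ^ 2) *
        ((deriv Dp x / Dp x - deriv Dn x / Dn x) +
          (deriv Dn x / Dn x - deriv Dm x / Dm x)) = n) :
    ∀ x ∈ Set.Ioo a b,
      deriv (fun t : ℝ => Dp t / Dm t) x = n * (Dn x / Dm x) ^ 2 := by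
  intro x hx
  have hm := hm0 x hx
  have hnn := hn0 x hx
  have hp := hp0 x hx
  have hder : deriv (fun t : ℝ => Dp t / Dm t) x
      = (deriv Dp x * Dm x - Dp x * deriv Dm x) / Dm x ^ 2 :=
    deriv_div (hdp x hx) (hdm x hx) hm
  have hs := hstring x hx
  rw [hder]
  field_simp at hs ⊢
  have hne : Dm x * Dp x * Dn x ^ 2 ≠ 0 :=
    mul_ne_zero (mul_ne_zero hm hp) (pow_ne_zero _ hnn)
  have key : (deriv Dp x * Dm x - Dp x * deriv Dm x) * (Dm x * Dp x * Dn x ^ 2)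
      = ((n : ℝ) * Dn x ^ 2) * (Dm x * Dp x * Dn x ^ 2) := by linear_combination (Dm x * Dp x * Dn x) * hs
  have := mul_right_cancel₀ hne key
  linarith
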